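/- Let n and p be positive integers, A a p × n matrix of polynomials with integer coefficients, and b a vector of p such polynomials. For each positive integer t let R(t) = {x ∈ ℝ^n : x ≥ 0 and A(t)x ≤ b(t)} and L(t) = R(t) ∩ ℤ^n, and assume R(t) is bounded for every positive integer t. Then there exists a positive integer r such that for all sufficiently large t, every x ∈ L(t) satisfies 0 ≤ x_i < t^r for every coordinate i. -/

import Mathlib

open Filter Polynomial Finset

namespace MyOrd

lemma poly_pos {P : ℝ[X]} (h : 0 < P.leadingCoeff) : ∀ᶠ x in atTop, 0 < P.eval x := by
  by_cases hdeg : 0 < P.degree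
  · exact (P.tendsto_atTop_of_leadingCoeff_nonneg hdeg h.le).eventually_gt_atTop 0
  · push_neg at hdeg
    have hc : P = C (P.coeff 0) := P.eq_C_of_degree_le_zero hdeg
    have h2 : P.leadingCoeff = P.coeff 0 := by
      rw [Polynomial.leadingCoeff, Polynomial.natDegree_eq_zero_iff_degree_le_zero.2 hdeg]
    exact Filter.Eventually.of_forall fun x => by rw [hc]; simpa using h2 ▸ h

lemma poly_sign (P : ℝ[X]) (hP : P ≠ 0) :
    (∀ᶠ x in atTop, 0 < P.eval x) ∨ (∀ᶠ x in atTop, P.eval x < 0) := by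
  rcases lt_trichotomy P.leadingCoeff 0 with h | h | h
  · right
    have : 0 < (-P).leadingCoeff := by simpa using h
    filter_upwards [poly_pos this] with x hx
    simpa using hx
  · exact absurd (Polynomial.leadingCoeff_eq_zero.1 h) hP
  · exact Or.inl (poly_pos h)

lemma monic_ev_ge_one {P : ℝ[X]} (hP : P.Monic) : ∀ᶠ x in atTop, 1 ≤ P.eval x := by
  by_cases hdeg : 0 < P.degree
  · exact (P.tendsto_atTop_of_leadingCoeff_nonneg hdeg
      (by rw [hP.leadingCoeff]; norm_num)).eventually_ge_atTop 1
  · push_neg at hdeg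
    have : P = 1 := hP.degree_le_zero_iff_eq_one.mp hdeg
    simp [this]

lemma poly_lt_pow {Q : ℝ[X]} {d : ℕ} (hQ : Q.degree < (d : ℕ)) :
    ∀ᶠ x in atTop, Q.eval x < x ^ d := by
  set R : ℝ[X] := X ^ d - Q with hR
  have hdeg : R.degree = (d : ℕ) := by
    rw [hR]
    rw [Polynomial.degree_sub_eq_left_of_degree_lt (by simpa [Polynomial.degree_X_pow] using hQ)]
    exact Polynomial.degree_X_pow d
  have hlc : 0 < R.leadingCoeff := by
    have : R.leadingCoeff = R.coeff d := by
      rw [Polynomial.leadingCoeff, Polynomial.natDegree_eq_of_degree_eq_some hdeg]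
    rw [this, hR]
    simp [Polynomial.coeff_X_pow, Polynomial.coeff_eq_zero_of_degree_lt hQ]
  filter_upwards [poly_pos hlc] with x hx
  have : R.eval x = x ^ d - Q.eval x := by simp [hR]
  linarith [this ▸ hx]

lemma poly_growth (P : ℝ[X]) : ∀ᶠ x in atTop, |P.eval x| ≤ x ^ (P.natDegree + 1) := by
  have h1 : P.degree < ((P.natDegree + 1 : ℕ) : ℕ) :=
    lt_of_le_of_lt P.degree_le_natDegree (by exact_mod_cast Nat.lt_succ_self _)
  have h2 : (-P).degree < ((P.natDegree + 1 : ℕ) : ℕ) := by simpa using h1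
  filter_upwards [poly_lt_pow h1, poly_lt_pow h2] with x hx hx'
  simp only [Polynomial.eval_neg] at hx'
  rw [abs_le]; constructor <;> linarith


abbrev K := RatFunc ℝ

noncomputable def ev (f : K) (x : ℝ) : ℝ := RatFunc.eval (RingHom.id ℝ) x f

lemma eval₂_id (P : ℝ[X]) (x : ℝ) : Polynomial.eval₂ (RingHom.id ℝ) x P = P.eval x := rfl

lemma ev_def (f : K) (x : ℝ) : ev f x = f.num.eval x / f.denom.eval x := by
  simp [ev, RatFunc.eval, eval₂_id]

lemma denom_ev (f : K) : ∀ᶠ x in atTop, 1 ≤ f.denom.eval x := monic_ev_ge_one f.monic_denom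

lemma denom_ne (f : K) : ∀ᶠ x in atTop, Polynomial.eval₂ (RingHom.id ℝ) x f.denom ≠ 0 := by
  filter_upwards [denom_ev f] with x hx
  rw [eval₂_id]; linarith

lemma ev_add (f g : K) : ∀ᶠ x in atTop, ev (f + g) x = ev f x + ev g x := by
  filter_upwards [denom_ne f, denom_ne g] with x h1 h2
  simp only [ev]; exact RatFunc.eval_add _ _ h1 h2

lemma ev_mul (f g : K) : ∀ᶠ x in atTop, ev (f * g) x = ev f x * ev g x := by
  filter_upwards [denom_ne f, denom_ne g] with x h1 h2
  simp only [ev]; exact RatFunc.eval_mul _ _ h1 h2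

lemma ev_zero (x : ℝ) : ev 0 x = 0 := RatFunc.eval_zero _ _
lemma ev_one (x : ℝ) : ev 1 x = 1 := RatFunc.eval_one _ _

lemma ev_sign (f : K) (hf : f ≠ 0) :
    (∀ᶠ x in atTop, 0 < ev f x) ∨ (∀ᶠ x in atTop, ev f x < 0) := by
  have hnum : f.num ≠ 0 := RatFunc.num_ne_zero hf
  rcases poly_sign f.num hnum with h | h
  · left; filter_upwards [h, denom_ev f] with x h1 h2
    rw [ev_def]; positivity
  · right; filter_upwards [h, denom_ev f] with x h1 h2
    rw [ev_def]
    exact div_neg_of_neg_of_pos h1 (by linarith)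

lemma ev_neg (f : K) : ∀ᶠ x in atTop, ev (-f) x = -ev f x := by
  filter_upwards [ev_add f (-f)] with x hx
  have : ev (f + -f) x = 0 := by simp [ev_zero]
  linarith [this ▸ hx]

lemma ev_sub (f g : K) : ∀ᶠ x in atTop, ev (f - g) x = ev f x - ev g x := by
  filter_upwards [ev_add f (-g), ev_neg g] with x h1 h2
  rw [sub_eq_add_neg, h1, h2]; ring

noncomputable instance : LinearOrder K where
  le f g := ∀ᶠ x in atTop, ev f x ≤ ev g x
  le_refl f := Eventually.of_forall fun _ => le_rfl
  le_trans f g h h1 h2 := by filter_upwards [h1, h2] with x hx1 hx2; linarith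
  le_antisymm f g h1 h2 := by
    by_contra hne
    have h0 : f - g ≠ 0 := sub_ne_zero.2 fun h => hne h
    rcases ev_sign _ h0 with h | h
    · obtain ⟨x, hx1, hx2, hx3⟩ := (h.and ((ev_sub f g).and h1)).exists
      rw [hx2] at hx1; linarith
    · obtain ⟨x, hx1, hx2, hx3⟩ := (h.and ((ev_sub f g).and h2)).exists
      rw [hx2] at hx1; linarith
  le_total f g := by
    rcases eq_or_ne f g with rfl | hne
    · left; exact Eventually.of_forall fun _ => le_rfl
    · rcases ev_sign (g - f) (sub_ne_zero.2 (Ne.symm hne)) with h | h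
      · left; filter_upwards [h, ev_sub g f] with x h1 h2; rw [h2] at h1; linarith
      · right; filter_upwards [h, ev_sub g f] with x h1 h2; rw [h2] at h1; linarith
  toDecidableLE := Classical.decRel _

noncomputable instance : IsOrderedAddMonoid K where
  add_le_add_left f g h c := by
    filter_upwards [h, ev_add f c, ev_add g c] with x h1 h2 h3
    rw [h2, h3]; linarith

noncomputable instance : ZeroLEOneClass K where
  zero_le_one := by
    apply Eventually.of_forall fun x => ?_
    rw [ev_zero, ev_one]; norm_num

noncomputable instance : IsStrictOrderedRing K := IsStrictOrderedRing.of_mul_pos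
  fun f g hf hg => by
    obtain ⟨hf1, hf2⟩ := hf
    obtain ⟨hg1, hg2⟩ := hg
    have hf1' : ∀ᶠ x in atTop, ev 0 x ≤ ev f x := hf1
    have hg1' : ∀ᶠ x in atTop, ev 0 x ≤ ev g x := hg1
    have hfp : ∀ᶠ x in atTop, 0 < ev f x := by
      rcases ev_sign f (by rintro rfl; exact hf2 hf1) with h | h
      · exact h
      · exfalso
        obtain ⟨x, h1, h2⟩ := (h.and hf1').exists
        rw [ev_zero] at h2; linarith
    have hgp : ∀ᶠ x in atTop, 0 < ev g x := by
      rcases ev_sign g (by rintro rfl; exact hg2 hg1) with h | h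
      · exact h
      · exfalso
        obtain ⟨x, h1, h2⟩ := (h.and hg1').exists
        rw [ev_zero] at h2; linarith
    constructor
    · show ∀ᶠ x in atTop, ev 0 x ≤ ev (f * g) x
      filter_upwards [hfp, hgp, ev_mul f g] with x h1 h2 h3
      rw [ev_zero, h3]; positivity
    · intro hle
      have hle' : ∀ᶠ x in atTop, ev (f * g) x ≤ ev 0 x := hle
      obtain ⟨x, h1, h2, h3, h4⟩ := (hfp.and (hgp.and ((ev_mul f g).and hle'))).exists
      rw [ev_zero] at h4; rw [h3] at h4; nlinarith


lemma le_iff {f g : K} : f ≤ g ↔ ∀ᶠ x in atTop, ev f x ≤ ev g x := Iff.rfl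

lemma nonneg_iff {f : K} : 0 ≤ f ↔ ∀ᶠ x in atTop, 0 ≤ ev f x := by
  rw [le_iff]
  exact eventually_congr (Eventually.of_forall fun x => by rw [ev_zero])

lemma one_le_iff {f : K} : 1 ≤ f ↔ ∀ᶠ x in atTop, 1 ≤ ev f x := by
  rw [le_iff]
  exact eventually_congr (Eventually.of_forall fun x => by rw [ev_one])

lemma pos_iff {f : K} : 0 < f ↔ ∀ᶠ x in atTop, 0 < ev f x := by
  constructor
  · intro h
    obtain ⟨h1, h2⟩ := lt_iff_le_not_ge.1 h
    rcases ev_sign f (by rintro rfl; exact h2 h1) with hs | hs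
    · exact hs
    · exfalso
      obtain ⟨x, hx1, hx2⟩ := (hs.and (nonneg_iff.1 h1)).exists
      linarith
  · intro h
    rw [lt_iff_le_not_ge]
    constructor
    · exact nonneg_iff.2 (h.mono fun x hx => hx.le)
    · intro hle
      obtain ⟨x, hx1, hx2⟩ := (h.and (le_iff.1 hle)).exists
      rw [ev_zero] at hx2; linarith

lemma ev_sum {ι : Type*} (s : Finset ι) (g : ι → K) :
    ∀ᶠ x in atTop, ev (∑ i ∈ s, g i) x = ∑ i ∈ s, ev (g i) x := by
  classical
  induction s using Finset.induction with
  | empty => exact Eventually.of_forall fun x => by simp [ev_zero]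
  | insert a s' hni ih =>
    filter_upwards [ih, ev_add (g a) (∑ i ∈ s', g i)] with x h1 h2
    rw [Finset.sum_insert hni, Finset.sum_insert hni, h2, h1]

end MyOrd



lemma sum_swap_mul {F : Type*} [CommRing F] {α β : Type*} [Fintype α] [Fintype β]
    (f : α → F) (g : α → β → F) (h : β → F) :
    ∑ b, (∑ a, f a * g a b) * h b = ∑ a, f a * ∑ b, g a b * h b := by
  simp only [Finset.sum_mul, Finset.mul_sum, mul_assoc]
  exact Finset.sum_comm

theorem farkas {F : Type*} [Field F] [LinearOrder F] [IsStrictOrderedRing F] (n : ℕ) :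
    ∀ {ι : Type} [Fintype ι] (A : ι → Fin n → F) (b : ι → F),
      (∃ x : Fin n → F, ∀ i, ∑ j, A i j * x j ≤ b i) ∨
      (∃ y : ι → F, (∀ i, 0 ≤ y i) ∧ (∀ j, ∑ i, y i * A i j = 0) ∧ ∑ i, y i * b i < 0) := by
  induction n with
  | zero =>
    intro ι _ A b
    classical
    by_cases h : ∀ i, 0 ≤ b i
    · exact Or.inl ⟨0, fun i => by simpa using h i⟩
    · push_neg at h
      obtain ⟨i0, hi0⟩ := h
      refine Or.inr ⟨fun i => if i = i0 then 1 else 0, fun i => by dsimp only; split <;> norm_num,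
        fun j => j.elim0, ?_⟩
      simp only [ite_mul, one_mul, zero_mul]
      rw [Finset.sum_ite_eq' Finset.univ i0 b]
      simpa using hi0
  | succ n ih =>
    intro ι _ A b
    classical
    set c : ι → F := fun i => A i (Fin.last n) with hc
    set Pt := {i : ι // 0 < c i} with hPt
    set Nt := {k : ι // c k < 0} with hNt
    set Zt := {z : ι // c z = 0} with hZt
    set coeff : (Pt × Nt ⊕ Zt) → ι → F := fun w l =>
      match w with
      | Sum.inl (i, k) => (if l = i.1 then -c k.1 else 0) + (if l = k.1 then c i.1 else 0)
      | Sum.inr z => if l = z.1 then 1 else 0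
      with hcoeff
    have coeff_nonneg : ∀ w l, 0 ≤ coeff w l := by
      rintro (⟨i, k⟩ | z) l
      · have h1 : (0:F) ≤ -c k.1 := by linarith [k.2]
        have h2 : (0:F) ≤ c i.1 := le_of_lt i.2
        simp only [hcoeff]
        apply add_nonneg
        · split <;> simp [h1]
        · split <;> simp [h2]
      · simp only [hcoeff]
        split <;> norm_num
    have comb_inl : ∀ (i : Pt) (k : Nt) (v : ι → F),
        ∑ l, coeff (Sum.inl (i, k)) l * v l = (-c k.1) * v i.1 + c i.1 * v k.1 := by
      intro i k v
      simp only [hcoeff, add_mul, ite_mul, zero_mul, Finset.sum_add_distrib]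
      rw [Finset.sum_ite_eq' Finset.univ i.1, Finset.sum_ite_eq' Finset.univ k.1]
      simp
    have comb_inr : ∀ (z : Zt) (v : ι → F), ∑ l, coeff (Sum.inr z) l * v l = v z.1 := by
      intro z v
      simp only [hcoeff, ite_mul, one_mul, zero_mul]
      rw [Finset.sum_ite_eq' Finset.univ z.1]
      simp
    set A' : (Pt × Nt ⊕ Zt) → Fin n → F := fun w j => ∑ l, coeff w l * A l j.castSucc with hA'
    set b' : (Pt × Nt ⊕ Zt) → F := fun w => ∑ l, coeff w l * b l with hb'
    rcases ih A' b' with ⟨x', hx'⟩ | ⟨y', hy0, hyA, hyb⟩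
    · -- feasible: extend x' with a last coordinate
      left
      set S : ι → F := fun l => ∑ j, A l j.castSucc * x' j with hS
      have hT : ∀ w, ∑ l, coeff w l * S l ≤ b' w := by
        intro w
        have h0 := hx' w
        rwa [hA', sum_swap_mul (coeff w) (fun l j => A l j.castSucc) x'] at h0
      set U : Pt → F := fun i => (b i.1 - S i.1) / c i.1 with hU
      set L : Nt → F := fun k => (b k.1 - S k.1) / c k.1 with hL
      have pair : ∀ (i : Pt) (k : Nt), L k ≤ U i := by
        intro i k
        have h1 := hT (Sum.inl (i, k))
        simp only [hb'] at h1
        rw [comb_inl i k S, comb_inl i k b] at h1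
        have hci : (0:F) < c i.1 := i.2
        have hck : c k.1 < 0 := k.2
        have e1 : c i.1 * U i = b i.1 - S i.1 := by
          rw [hU, mul_comm]; exact div_mul_cancel₀ _ (ne_of_gt hci)
        have e2 : c k.1 * L k = b k.1 - S k.1 := by
          rw [hL, mul_comm]; exact div_mul_cancel₀ _ (ne_of_lt hck)
        nlinarith [mul_pos hci (neg_pos.2 hck)]
      set xn : F := if hP : (Finset.univ : Finset Pt).Nonempty then Finset.univ.inf' hP U
        else if hN : (Finset.univ : Finset Nt).Nonempty then Finset.univ.sup' hN L else 0
        with hxn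
      have hxnU : ∀ i : Pt, xn ≤ U i := by
        intro i
        have hP : (Finset.univ : Finset Pt).Nonempty := ⟨i, Finset.mem_univ i⟩
        rw [hxn, dif_pos hP]
        exact Finset.inf'_le _ (Finset.mem_univ i)
      have hxnL : ∀ k : Nt, L k ≤ xn := by
        intro k
        by_cases hP : (Finset.univ : Finset Pt).Nonempty
        · rw [hxn, dif_pos hP]
          obtain ⟨i0, _, hi0⟩ := Finset.exists_mem_eq_inf' hP U
          rw [hi0]
          exact pair i0 k
        · have hN : (Finset.univ : Finset Nt).Nonempty := ⟨k, Finset.mem_univ k⟩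
          rw [hxn, dif_neg hP, dif_pos hN]
          exact Finset.le_sup' _ (Finset.mem_univ k)
      refine ⟨(Fin.snoc x' xn : Fin (n+1) → F), fun l => ?_⟩
      have expand : ∑ j, A l j * (Fin.snoc x' xn : Fin (n+1) → F) j = S l + c l * xn := by
        rw [Fin.sum_univ_castSucc]
        simp only [Fin.snoc_castSucc, Fin.snoc_last, hS, hc]
      rw [expand]
      rcases lt_trichotomy (c l) 0 with hl | hl | hl
      · have hk := hxnL ⟨l, hl⟩
        have h2 : c l * xn ≤ c l * L ⟨l, hl⟩ := mul_le_mul_of_nonpos_left hk (le_of_lt hl)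
        have e2 : c l * L ⟨l, hl⟩ = b l - S l := by
          rw [hL, mul_comm]; exact div_mul_cancel₀ _ (ne_of_lt hl)
        rw [e2] at h2
        linarith
      · have h1 := hT (Sum.inr ⟨l, hl⟩)
        simp only [hb'] at h1
        rw [comb_inr ⟨l, hl⟩ S, comb_inr ⟨l, hl⟩ b] at h1
        rw [hl]
        linarith
      · have hk := hxnU ⟨l, hl⟩
        have h2 : c l * xn ≤ c l * U ⟨l, hl⟩ := mul_le_mul_of_nonneg_left hk (le_of_lt hl)
        have e2 : c l * U ⟨l, hl⟩ = b l - S l := by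
          rw [hU, mul_comm]; exact div_mul_cancel₀ _ (ne_of_gt hl)
        rw [e2] at h2
        linarith
    · -- certificate: combine
      right
      refine ⟨fun l => ∑ w, y' w * coeff w l, fun l => ?_, fun j => ?_, ?_⟩
      · exact Finset.sum_nonneg fun w _ => mul_nonneg (hy0 w) (coeff_nonneg w l)
      · rw [sum_swap_mul y' coeff (fun l => A l j)]
        refine Fin.lastCases ?_ (fun j' => ?_) j
        · refine Finset.sum_eq_zero fun w _ => ?_
          rcases w with ⟨i, k⟩ | z
          · have h0 : ∑ l, coeff (Sum.inl (i, k)) l * c l = 0 := by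
              rw [comb_inl i k c]; ring
            exact mul_eq_zero_of_right _ h0
          · have h0 : ∑ l, coeff (Sum.inr z) l * c l = 0 := by
              rw [comb_inr z c]; exact z.2
            exact mul_eq_zero_of_right _ h0
        · exact hyA j'
      · rw [sum_swap_mul y' coeff b]
        exact hyb



theorem gordan {F : Type*} [Field F] [LinearOrder F] [IsStrictOrderedRing F] (p n : ℕ) (M : Fin p → Fin n → F) :
    (∃ y : Fin p → F, (∀ i, 0 ≤ y i) ∧ ∀ j, 1 ≤ ∑ i, y i * M i j) ∨
    (∃ u : Fin n → F, (∀ j, 0 ≤ u j) ∧ (∃ j, 0 < u j) ∧ ∀ i, ∑ j, M i j * u j ≤ 0) := by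
  classical
  set B : (Fin p ⊕ Fin n) → Fin p → F := fun l i =>
    match l with
    | Sum.inl i' => if i = i' then -1 else 0
    | Sum.inr j => -(M i j)
    with hB
  set c : (Fin p ⊕ Fin n) → F := fun l =>
    match l with
    | Sum.inl _ => 0
    | Sum.inr _ => -1
    with hc
  rcases farkas p B c with ⟨x, hx⟩ | ⟨z, hz0, hzB, hzc⟩
  · left
    refine ⟨x, fun i => ?_, fun j => ?_⟩
    · have h1 := hx (Sum.inl i)
      simp only [hB, hc, ite_mul, neg_one_mul, zero_mul] at h1
      rw [Finset.sum_ite_eq' Finset.univ i (fun i' => -x i')] at h1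
      simpa using h1
    · have h1 := hx (Sum.inr j)
      simp only [hB, hc, neg_mul] at h1
      have h2 : ∑ i, x i * M i j = ∑ i, M i j * x i := by
        exact Finset.sum_congr rfl fun i _ => mul_comm _ _
      rw [h2]
      have h3 : (1:F) ≤ ∑ i, M i j * x i := by
        have := neg_le_neg h1
        simpa [Finset.sum_neg_distrib] using this
      exact h3
  · right
    refine ⟨fun j => z (Sum.inr j), fun j => hz0 _, ?_, fun i => ?_⟩
    · by_contra h
      push_neg at h
      have hsum : ∑ j, z (Sum.inr j) ≤ 0 :=
        Finset.sum_nonpos fun j _ => h j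
      have h1 : ∑ l, z l * c l = -∑ j, z (Sum.inr j) := by
        rw [Fintype.sum_sum_type]
        simp [hc]
      rw [h1] at hzc
      linarith
    · have h1 := hzB i
      rw [Fintype.sum_sum_type] at h1
      simp only [hB] at h1
      rw [Finset.sum_congr rfl (fun i' (_ : i' ∈ Finset.univ) => by
        rw [show (if i = i' then (-1:F) else 0) = if i' = i then -1 else 0 by
          by_cases h : i = i' <;> simp [h, eq_comm] ])] at h1
      simp only [mul_ite, mul_neg_one, mul_zero] at h1
      rw [Finset.sum_ite_eq' Finset.univ i (fun i' => -(z (Sum.inl i')))] at h1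
      simp only [Finset.mem_univ, if_true] at h1
      have h2 : ∑ j', z (Sum.inr j') * -(M i j') = -∑ j', M i j' * z (Sum.inr j') := by
        rw [← Finset.sum_neg_distrib]
        exact Finset.sum_congr rfl fun j' _ => by ring
      rw [h2] at h1
      have h3 := hz0 (Sum.inl i)
      linarith



/-- Evaluation of an integer polynomial at a positive integer `t`. -/
def evalAt (p : Polynomial ℤ) (t : ℕ) : ℤ := p.eval (t : ℤ)

lemma L1 (q : Polynomial ℤ) (t : ℕ) :
    ((evalAt q t : ℤ) : ℝ) = (q.map (Int.castRingHom ℝ)).eval ((t : ℕ) : ℝ) := by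
  rw [evalAt, Polynomial.eval_map,
    show ((t : ℕ) : ℝ) = (Int.castRingHom ℝ) ((t : ℕ) : ℤ) by simp,
    Polynomial.eval₂_at_apply]
  rfl

lemma L2 (q : Polynomial ℝ) (x : ℝ) :
    MyOrd.ev (algebraMap (Polynomial ℝ) (RatFunc ℝ) q) x = q.eval x := by
  simp [MyOrd.ev, RatFunc.eval_algebraMap, MyOrd.eval₂_id]

lemma ev_abs_le (f : MyOrd.K) :
    ∀ᶠ x in atTop, |MyOrd.ev f x| ≤ x ^ (f.num.natDegree + 1) := by
  filter_upwards [MyOrd.poly_growth f.num, MyOrd.denom_ev f] with x h1 h2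
  rw [MyOrd.ev_def, abs_div]
  calc |Polynomial.eval x f.num| / |Polynomial.eval x f.denom|
      ≤ |Polynomial.eval x f.num| := by
        apply div_le_self (abs_nonneg _)
        rw [abs_of_pos (by linarith)]
        exact h2
    _ ≤ x ^ (f.num.natDegree + 1) := h1

/-- if the parametric polyhedron `{x ≥ 0 : A(t) x ≤ b(t)}` is bounded
for every `t > 0`, then there is a positive integer `r` such that for all sufficiently
large `t`, every lattice point `x` of the polyhedron satisfies `0 ≤ xᵢ < t^r`. -/
theorem lattice_points_polynomially_bounded (n p : ℕ) (hn : 0 < n) (hp : 0 < p)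
    (A : Matrix (Fin p) (Fin n) (Polynomial ℤ)) (b : Fin p → Polynomial ℤ)
    (hbdd : ∀ t : ℕ, 0 < t → Bornology.IsBounded
      {x : Fin n → ℝ | (∀ j, 0 ≤ x j) ∧
        ∀ i, ∑ j, (evalAt (A i j) t : ℝ) * x j ≤ (evalAt (b i) t : ℝ)}) :
    ∃ r : ℕ, 0 < r ∧ ∃ N : ℕ, ∀ t : ℕ, N ≤ t →
      ∀ x : Fin n → ℤ,
        ((∀ j, 0 ≤ x j) ∧ ∀ i, ∑ j, evalAt (A i j) t * x j ≤ evalAt (b i) t) →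
        ∀ j, 0 ≤ x j ∧ x j < (t : ℤ) ^ r := by
  classical
  set Ab : Fin p → Fin n → Polynomial ℝ := fun i j => (A i j).map (Int.castRingHom ℝ) with hAb
  set Bb : Fin p → Polynomial ℝ := fun i => (b i).map (Int.castRingHom ℝ) with hBb
  set M : Fin p → Fin n → MyOrd.K := fun i j => algebraMap (Polynomial ℝ) (RatFunc ℝ) (Ab i j)
    with hM
  rcases gordan p n M with ⟨y, hy0, hy1⟩ | ⟨u, hu0, ⟨j0, hj0⟩, huM⟩
  · -- bounding certificate case
    set D : ℕ := Finset.univ.sup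
      (fun i : Fin p => (y i * algebraMap (Polynomial ℝ) (RatFunc ℝ) (Bb i)).num.natDegree + 1)
      with hD
    have EV1 : ∀ᶠ x : ℝ in atTop, ∀ i, 0 ≤ MyOrd.ev (y i) x :=
      eventually_all.2 fun i => MyOrd.nonneg_iff.1 (hy0 i)
    have EV2 : ∀ᶠ x : ℝ in atTop, ∀ j, 1 ≤ ∑ i, MyOrd.ev (y i) x * (Ab i j).eval x := by
      refine eventually_all.2 fun j => ?_
      filter_upwards [MyOrd.one_le_iff.1 (hy1 j),
        MyOrd.ev_sum Finset.univ (fun i => y i * M i j),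
        eventually_all.2 fun i : Fin p => MyOrd.ev_mul (y i) (M i j)] with x h1 h2 h3
      rw [h2] at h1
      have h4 : ∑ i, MyOrd.ev (y i * M i j) x = ∑ i, MyOrd.ev (y i) x * (Ab i j).eval x :=
        Finset.sum_congr rfl fun i _ => by rw [h3 i, hM, L2]
      rwa [h4] at h1
    have EV3 : ∀ᶠ x : ℝ in atTop, ∀ i, |MyOrd.ev (y i) x * (Bb i).eval x| ≤ x ^ D := by
      refine eventually_all.2 fun i => ?_
      filter_upwards [ev_abs_le (y i * algebraMap (Polynomial ℝ) (RatFunc ℝ) (Bb i)),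
        MyOrd.ev_mul (y i) (algebraMap (Polynomial ℝ) (RatFunc ℝ) (Bb i)),
        eventually_ge_atTop (1 : ℝ)] with x h1 h2 hx1
      rw [← L2 (Bb i) x, ← h2]
      refine h1.trans (pow_le_pow_right₀ hx1 ?_)
      exact Finset.le_sup (f := fun i => (y i * algebraMap (Polynomial ℝ) (RatFunc ℝ) (Bb i)).num.natDegree + 1) (Finset.mem_univ i)
    obtain ⟨x0, hx0⟩ := eventually_atTop.1
      (EV1.and (EV2.and (EV3.and ((eventually_ge_atTop (1:ℝ)).and
        ((eventually_ge_atTop ((p:ℕ):ℝ)).and (eventually_gt_atTop (1:ℝ)))))))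
    refine ⟨D + 2, by omega, max 1 (Nat.ceil x0), fun t ht x hx j => ?_⟩
    obtain ⟨hx1, hx2⟩ := hx
    refine ⟨hx1 j, ?_⟩
    have hxr : x0 ≤ (t : ℝ) := by
      refine (Nat.le_ceil x0).trans ?_
      exact_mod_cast le_trans (le_max_right 1 (Nat.ceil x0)) ht
    obtain ⟨h1, h2, h3, h4, h5, h6⟩ := hx0 (t : ℝ) hxr
    set X : Fin n → ℝ := fun j => ((x j : ℤ) : ℝ) with hX
    have hX0 : ∀ j, 0 ≤ X j := fun j' => by simp only [hX]; exact_mod_cast hx1 j'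
    have hci : ∀ i, ∑ j', (Ab i j').eval ((t:ℕ):ℝ) * X j' ≤ (Bb i).eval ((t:ℕ):ℝ) := by
      intro i
      have hc := (Int.cast_le (R := ℝ)).2 (hx2 i)
      push_cast at hc
      calc ∑ j', (Ab i j').eval ((t:ℕ):ℝ) * X j'
          = ∑ j', ((evalAt (A i j') t : ℤ) : ℝ) * X j' :=
            Finset.sum_congr rfl fun j' _ => by rw [L1]
        _ ≤ ((evalAt (b i) t : ℤ) : ℝ) := by simp only [hX]; exact_mod_cast hc
        _ = (Bb i).eval ((t:ℕ):ℝ) := L1 _ _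
    have key : X j < ((t:ℕ):ℝ) ^ (D + 2) := by
      set xx : ℝ := ((t:ℕ):ℝ)
      have hx1' : (1:ℝ) ≤ xx := h4
      calc X j ≤ (∑ i, MyOrd.ev (y i) xx * (Ab i j).eval xx) * X j :=
            le_mul_of_one_le_left (hX0 j) (h2 j)
        _ ≤ ∑ j', (∑ i, MyOrd.ev (y i) xx * (Ab i j').eval xx) * X j' := by
            refine Finset.single_le_sum
              (f := fun j' => (∑ i, MyOrd.ev (y i) xx * (Ab i j').eval xx) * X j')
              (fun j' _ => ?_) (Finset.mem_univ j)
            exact mul_nonneg (le_trans zero_le_one (h2 j')) (hX0 j')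
        _ = ∑ i, MyOrd.ev (y i) xx * ∑ j', (Ab i j').eval xx * X j' :=
            sum_swap_mul (fun i => MyOrd.ev (y i) xx) (fun i j' => (Ab i j').eval xx) X
        _ ≤ ∑ i, MyOrd.ev (y i) xx * (Bb i).eval xx :=
            Finset.sum_le_sum fun i _ => mul_le_mul_of_nonneg_left (hci i) (h1 i)
        _ ≤ ∑ i, |MyOrd.ev (y i) xx * (Bb i).eval xx| :=
            Finset.sum_le_sum fun i _ => le_abs_self _
        _ ≤ ∑ _i : Fin p, xx ^ D := Finset.sum_le_sum fun i _ => h3 i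
        _ = (p : ℝ) * xx ^ D := by rw [Finset.sum_const, Finset.card_univ, Fintype.card_fin,
            nsmul_eq_mul]
        _ ≤ xx * xx ^ D := mul_le_mul_of_nonneg_right h5 (pow_nonneg (by linarith) D)
        _ = xx ^ (D + 1) := by ring
        _ = xx ^ (D + 1) * 1 := by ring
        _ < xx ^ (D + 1) * xx :=
            mul_lt_mul_of_pos_left h6 (pow_pos (by linarith) (D + 1))
        _ = xx ^ (D + 2) := by ring
    have key2 : X j = ((x j : ℤ) : ℝ) := rfl
    rw [key2] at key
    exact_mod_cast key
  · -- recession direction case: no lattice points for large t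
    have EV1 : ∀ᶠ x : ℝ in atTop, ∀ j, 0 ≤ MyOrd.ev (u j) x :=
      eventually_all.2 fun j => MyOrd.nonneg_iff.1 (hu0 j)
    have EV2 : ∀ᶠ x : ℝ in atTop, 0 < MyOrd.ev (u j0) x := MyOrd.pos_iff.1 hj0
    have EV3 : ∀ᶠ x : ℝ in atTop, ∀ i, ∑ j, (Ab i j).eval x * MyOrd.ev (u j) x ≤ 0 := by
      refine eventually_all.2 fun i => ?_
      have h0 : MyOrd.ev (∑ j, M i j * u j) ≤ᶠ[atTop] fun _ => (0:ℝ) := by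
        have := MyOrd.le_iff.1 (huM i)
        filter_upwards [this] with x hx
        rw [MyOrd.ev_zero] at hx
        exact hx
      filter_upwards [h0, MyOrd.ev_sum Finset.univ (fun j => M i j * u j),
        eventually_all.2 fun j : Fin n => MyOrd.ev_mul (M i j) (u j)] with x hx h2 h3
      have h4 : ∑ j, MyOrd.ev (M i j * u j) x = ∑ j, (Ab i j).eval x * MyOrd.ev (u j) x :=
        Finset.sum_congr rfl fun j _ => by rw [h3 j, hM, L2]
      calc ∑ j, (Ab i j).eval x * MyOrd.ev (u j) x = MyOrd.ev (∑ j, M i j * u j) x := by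
            rw [h2, h4]
        _ ≤ 0 := hx
    obtain ⟨x0, hx0⟩ := eventually_atTop.1 (EV1.and (EV2.and EV3))
    refine ⟨1, one_pos, max 1 (Nat.ceil x0), fun t ht x hx j => ?_⟩
    exfalso
    obtain ⟨hx1, hx2⟩ := hx
    have ht1 : 1 ≤ t := le_trans (le_max_left _ _) ht
    have hxr : x0 ≤ (t : ℝ) := by
      refine (Nat.le_ceil x0).trans ?_
      exact_mod_cast le_trans (le_max_right 1 (Nat.ceil x0)) ht
    obtain ⟨h1, h2, h3⟩ := hx0 (t : ℝ) hxr
    obtain ⟨C, hC⟩ := isBounded_iff_forall_norm_le.1 (hbdd t ht1)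
    set v : Fin n → ℝ := fun j => MyOrd.ev (u j) ((t:ℕ):ℝ) with hv
    set lam : ℝ := (|C| + 1) / v j0 with hlam
    have hlam0 : 0 ≤ lam := div_nonneg (by positivity) (le_of_lt h2)
    set z : Fin n → ℝ := fun j => ((x j : ℤ) : ℝ) + lam * v j with hz
    have hzmem : z ∈ {w : Fin n → ℝ | (∀ j, 0 ≤ w j) ∧
        ∀ i, ∑ j', (evalAt (A i j') t : ℝ) * w j' ≤ (evalAt (b i) t : ℝ)} := by
      constructor
      · intro j'
        have : (0:ℝ) ≤ ((x j' : ℤ) : ℝ) := by exact_mod_cast hx1 j'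
        have hv0 : 0 ≤ v j' := h1 j'
        rw [hz]
        positivity
      · intro i
        have hsplit : ∑ j', (evalAt (A i j') t : ℝ) * z j' =
            ∑ j', (evalAt (A i j') t : ℝ) * ((x j' : ℤ) : ℝ) +
            lam * ∑ j', (Ab i j').eval ((t:ℕ):ℝ) * v j' := by
          rw [Finset.mul_sum, ← Finset.sum_add_distrib]
          refine Finset.sum_congr rfl fun j' _ => ?_
          rw [hz, L1]
          ring
        rw [hsplit]
        have hc := (Int.cast_le (R := ℝ)).2 (hx2 i)
        push_cast at hc
        have h5 : lam * ∑ j', (Ab i j').eval ((t:ℕ):ℝ) * v j' ≤ 0 :=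
          mul_nonpos_of_nonneg_of_nonpos hlam0 (h3 i)
        have h6 : ∑ j', (evalAt (A i j') t : ℝ) * ((x j' : ℤ) : ℝ) ≤ (evalAt (b i) t : ℝ) := by
          exact_mod_cast hc
        linarith
    have hnorm := hC z hzmem
    have hzj0 : z j0 ≤ ‖z‖ := by
      calc z j0 ≤ |z j0| := le_abs_self _
        _ = ‖z j0‖ := rfl
        _ ≤ ‖z‖ := norm_le_pi_norm z j0
    have hlamv : lam * v j0 = |C| + 1 := div_mul_cancel₀ _ (ne_of_gt h2)
    have hxj0 : (0:ℝ) ≤ ((x j0 : ℤ) : ℝ) := by exact_mod_cast hx1 j0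
    have hzj : z j0 = ((x j0 : ℤ) : ℝ) + lam * v j0 := rfl
    rw [hlamv] at hzj
    have hac : C ≤ |C| := le_abs_self C
    linarith [hzj ▸ hzj0]
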